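/- For variables x_1,...,x_{n+1} and r ≥ n, the ratio of determinants det[rows: (1,...,1), (x_1,...,x_{n+1}), ..., (x_1^{n-1},...,x_{n+1}^{n-1}), (x_1^r,...,x_{n+1}^r)] divided by the Vandermonde determinant det[(x_i^j)_{j=0..n, i=1..n+1}] equals the complete sum over all monomials x_1^{j_1}···x_{n+1}^{j_{n+1}} with j_1+···+j_{n+1} = r−n, i.e., the complete homogeneous symmetric polynomial h_{r−n}(x_1,...,x_{n+1}). -/

import Mathlib

open Polynomial Finset

/-- Multilinearity of the determinant in one row. -/
lemma aux_det_updateRow_lin {R : Type*} [CommRing R] {m : Type*} [DecidableEq m] [Fintype m]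
    (A : Matrix m m R) (j : m) {ι : Type*} [DecidableEq ι] [DecidableEq ι] (s : Finset ι) (c : ι → R) (v : ι → m → R) :
    (A.updateRow j (∑ k ∈ s, c k • v k)).det = ∑ k ∈ s, c k * (A.updateRow j (v k)).det := by
  induction s using Finset.induction_on with
  | empty =>
      simp only [Finset.sum_empty]
      exact Matrix.det_eq_zero_of_row_eq_zero j (by simp)
  | insert _ _ hk ih =>
      rw [Finset.sum_insert hk, Matrix.det_updateRow_add, Matrix.det_updateRow_smul, ih,
        Finset.sum_insert hk]

/-- Geometric series is inverse to `1 - aX`. -/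
lemma aux_geom_inv {R : Type*} [CommRing R] (a : R) :
    (1 - PowerSeries.C a * PowerSeries.X) * PowerSeries.mk (fun k => a ^ k) = 1 := by
  ext n
  cases n with
  | zero => simp
  | succ n =>
      simp only [sub_mul, one_mul, map_sub, mul_assoc, PowerSeries.coeff_C_mul,
        PowerSeries.coeff_succ_X_mul, PowerSeries.coeff_mk, PowerSeries.coeff_one,
        Nat.succ_ne_zero, if_false, pow_succ]
      ring

/-- Reflection of a product of linear factors. -/
lemma aux_reflect_prod {R : Type*} [CommRing R] {ι : Type*} [DecidableEq ι] (s : Finset ι) (f : ι → R) :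
    Polynomial.reflect s.card (∏ i ∈ s, (X - C (f i))) = ∏ i ∈ s, (1 - C (f i) * X) := by
  induction s using Finset.induction_on with
  | empty => simp
  | @insert a s ha ih =>
      rw [Finset.card_insert_of_notMem ha, Finset.prod_insert ha, Finset.prod_insert ha,
        add_comm, ← ih]
      rw [Polynomial.reflect_mul (X - C (f a)) _ (natDegree_X_sub_C_le (f a))
        (le_trans (Polynomial.natDegree_prod_le _ _) (by
          apply le_trans (Finset.sum_le_card_nsmul s _ 1 ?_) (by simp)
          intro i _
          exact natDegree_X_sub_C_le (f i)))]
      congr 1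
      rw [sub_eq_add_neg, ← C_neg, reflect_add, reflect_C, reflect_one_X, C_neg]
      ring

/-- The ratio of the modified Vandermonde determinant (last power row `x_j^n`
replaced by `x_j^r`) to the Vandermonde determinant equals the complete
homogeneous symmetric polynomial `h_{r-n}` in the `n+1` variables. -/
theorem stmt_0 (K : Type*) [Field K] (n r : ℕ) (hr : n ≤ r)
    (x : Fin (n + 1) → K) (hx : Function.Injective x) :
    (Matrix.of fun i j : Fin (n + 1) =>
        if (i : ℕ) < n then x j ^ (i : ℕ) else x j ^ r).det /
      (Matrix.vandermonde x).det =
    ∑ j ∈ Finset.Nat.antidiagonalTuple (n + 1) (r - n), ∏ i, x i ^ j i := by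
  classical
  set V : K := (Matrix.vandermonde x).det with hVdef
  have hV : V ≠ 0 := Matrix.det_vandermonde_ne_zero_iff.mpr hx
  set A : Matrix (Fin (n + 1)) (Fin (n + 1)) K := (Matrix.vandermonde x).transpose with hA
  set D : ℕ → K := fun s => (A.updateRow (Fin.last n) (fun j => x j ^ s)).det with hD
  -- the statement matrix is an updateRow of A
  have hM : ∀ s : ℕ, (Matrix.of fun i j : Fin (n + 1) =>
      if (i : ℕ) < n then x j ^ (i : ℕ) else x j ^ s)
      = A.updateRow (Fin.last n) (fun j => x j ^ s) := by
    intro s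
    ext i j
    by_cases h : (i : ℕ) < n
    · have hi : i ≠ Fin.last n := by
        intro hh
        rw [hh, Fin.val_last] at h
        omega
      rw [Matrix.of_apply, if_pos h, Matrix.updateRow_ne hi, hA, Matrix.transpose_apply,
        Matrix.vandermonde_apply]
    · have hi : i = Fin.last n := by
        apply Fin.ext
        have := i.isLt
        rw [Fin.val_last]
        omega
      rw [Matrix.of_apply, if_neg h, hi, Matrix.updateRow_self]
  -- D vanishes below n
  have hD0 : ∀ s, s < n → D s = 0 := by
    intro s hs
    have hne : (⟨s, by omega⟩ : Fin (n + 1)) ≠ Fin.last n := by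
      intro hh
      have := congrArg Fin.val hh
      simp only [Fin.val_last] at this
      omega
    apply Matrix.det_zero_of_row_eq hne
    rw [Matrix.updateRow_ne hne, Matrix.updateRow_self]
    funext j
    rw [hA, Matrix.transpose_apply, Matrix.vandermonde_apply]
  -- D n is the Vandermonde determinant
  have hDn : D n = V := by
    have h1 : (fun j => x j ^ n) = A (Fin.last n) := by
      funext j
      rw [hA, Matrix.transpose_apply, Matrix.vandermonde_apply, Fin.val_last]
    show (A.updateRow (Fin.last n) (fun j => x j ^ n)).det = V
    rw [h1, Matrix.updateRow_eq_self, hA, Matrix.det_transpose]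
  -- polynomials
  set Qp : Polynomial K := ∏ i, (Polynomial.X - Polynomial.C (x i)) with hQp
  set Pp : Polynomial K := ∏ i, (1 - Polynomial.C (x i) * Polynomial.X) with hPp
  have hQdeg : Qp.natDegree = n + 1 := by
    rw [hQp, Polynomial.natDegree_prod _ _ (fun i _ => Polynomial.X_sub_C_ne_zero (x i))]
    simp [Polynomial.natDegree_X_sub_C]
  have hreflect : Polynomial.reflect (n + 1) Qp = Pp := by
    have h := aux_reflect_prod (Finset.univ : Finset (Fin (n + 1))) x
    simpa using h
  have hPcoeff : ∀ b, b ≤ n + 1 → Pp.coeff b = Qp.coeff (n + 1 - b) := by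
    intro b hb
    rw [← hreflect, Polynomial.coeff_reflect, Polynomial.revAt_le hb]
  have hPcoeff0 : ∀ b, n + 1 < b → Pp.coeff b = 0 := by
    intro b hb
    rw [← hreflect, Polynomial.coeff_reflect, Polynomial.revAt_eq_self_of_lt hb]
    exact Polynomial.coeff_eq_zero_of_natDegree_lt (by omega)
  have hQeval : ∀ j, Qp.eval (x j) = 0 := by
    intro j
    rw [hQp, Polynomial.eval_prod]
    exact Finset.prod_eq_zero (Finset.mem_univ j) (by simp)
  -- key recurrence
  have hkey : ∀ m : ℕ, 1 ≤ m →
      ∑ k ∈ Finset.range (n + 2), Qp.coeff k * D (m - 1 + k) = 0 := by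
    intro m hm
    rw [hD]
    simp only
    rw [← aux_det_updateRow_lin A (Fin.last n) (Finset.range (n + 2))
      (fun k => Qp.coeff k) (fun k => fun j => x j ^ (m - 1 + k))]
    apply Matrix.det_eq_zero_of_row_eq_zero (Fin.last n)
    intro j
    rw [Matrix.updateRow_self]
    simp only [Finset.sum_apply, Pi.smul_apply, smul_eq_mul]
    calc ∑ k ∈ Finset.range (n + 2), Qp.coeff k * x j ^ (m - 1 + k)
        = x j ^ (m - 1) * ∑ k ∈ Finset.range (n + 2), Qp.coeff k * x j ^ k := by
          rw [Finset.mul_sum]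
          apply Finset.sum_congr rfl
          intro k _
          rw [pow_add]
          ring
      _ = x j ^ (m - 1) * Qp.eval (x j) := by
          rw [Polynomial.eval_eq_sum_range' (by omega : Qp.natDegree < n + 2)]
      _ = 0 := by rw [hQeval]; ring
  -- power series
  set G : PowerSeries K := ∏ i, PowerSeries.mk (fun k => x i ^ k) with hG
  have hPG : (Pp : PowerSeries K) * G = 1 := by
    rw [hPp, hG]
    have hcoe := map_prod (Polynomial.coeToPowerSeries.ringHom (R := K))
      (fun i => (1 - Polynomial.C (x i) * Polynomial.X)) Finset.univ
    simp only [Polynomial.coeToPowerSeries.ringHom_apply] at hcoe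
    rw [hcoe, ← Finset.prod_mul_distrib]
    apply Finset.prod_eq_one
    intro i _
    have hone : ((1 - Polynomial.C (x i) * Polynomial.X : Polynomial K) : PowerSeries K)
        = 1 - PowerSeries.C (x i) * PowerSeries.X := by
      rw [Polynomial.coe_sub, Polynomial.coe_one, Polynomial.coe_mul, Polynomial.coe_C,
        Polynomial.coe_X]
    rw [hone]
    exact aux_geom_inv (x i)
  set F : PowerSeries K := PowerSeries.mk (fun m => D (n + m)) with hF
  have hFP : F * (Pp : PowerSeries K) = PowerSeries.C V := by
    ext m
    rw [PowerSeries.coeff_mul]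
    have hterm : ∀ p ∈ Finset.HasAntidiagonal.antidiagonal m,
        (PowerSeries.coeff p.1) F * (PowerSeries.coeff p.2) (Pp : PowerSeries K)
        = Pp.coeff p.2 * D (n + p.1) := by
      intro p _
      rw [hF, PowerSeries.coeff_mk, Polynomial.coeff_coe, mul_comm]
    rw [Finset.sum_congr rfl hterm]
    cases m with
    | zero =>
        rw [Finset.Nat.antidiagonal_zero, Finset.sum_singleton]
        have h0 : Pp.coeff 0 = 1 := by
          rw [Polynomial.coeff_zero_eq_eval_zero, hPp, Polynomial.eval_prod]
          simp
        simp [h0, hDn]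
    | succ m' =>
        have hm : 1 ≤ m' + 1 := by omega
        set m := m' + 1 with hmdef
        rw [Finset.Nat.sum_antidiagonal_eq_sum_range_succ
          (fun a b => Pp.coeff b * D (n + a)) m]
        have hstep1 : ∑ k ∈ Finset.range (m + 1), Pp.coeff (m - k) * D (n + k)
            = ∑ b ∈ Finset.range (m + 1), Pp.coeff b * D (n + m - b) := by
          rw [← Finset.sum_range_reflect]
          apply Finset.sum_congr rfl
          intro b hb
          rw [Finset.mem_range] at hb
          congr 2 <;> omega
        rw [hstep1]
        have hstep2 : ∑ b ∈ Finset.range (m + 1), Pp.coeff b * D (n + m - b)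
            = ∑ b ∈ Finset.range (max (m + 1) (n + 2)), Pp.coeff b * D (n + m - b) := by
          apply Finset.sum_subset
          · exact Finset.range_subset_range.mpr (le_max_left _ _)
          · intro b _ hb
            rw [Finset.mem_range, not_lt] at hb
            rcases le_or_gt b (n + 1) with hble | hbgt
            · rw [hD0 (n + m - b) (by omega), mul_zero]
            · rw [hPcoeff0 b hbgt, zero_mul]
        rw [hstep2]
        have hstep3 : ∑ b ∈ Finset.range (max (m + 1) (n + 2)), Pp.coeff b * D (n + m - b)
            = ∑ b ∈ Finset.range (n + 2), Pp.coeff b * D (n + m - b) := by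
          symm
          apply Finset.sum_subset
          · exact Finset.range_subset_range.mpr (le_max_right _ _)
          · intro b _ hb
            rw [Finset.mem_range, not_lt] at hb
            rw [hPcoeff0 b (by omega), zero_mul]
        rw [hstep3]
        have hstep4 : ∑ b ∈ Finset.range (n + 2), Pp.coeff b * D (n + m - b)
            = ∑ k ∈ Finset.range (n + 2), Qp.coeff k * D (m - 1 + k) := by
          rw [← Finset.sum_range_reflect]
          apply Finset.sum_congr rfl
          intro k hk
          rw [Finset.mem_range] at hk
          rw [hPcoeff (n + 2 - 1 - k) (by omega)]
          congr 2 <;> omega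
        rw [hstep4, hkey m hm]
        simp [PowerSeries.coeff_C]
  have hFeq : F = PowerSeries.C V * G := by
    calc F = F * ((Pp : PowerSeries K) * G) := by rw [hPG, mul_one]
    _ = F * (Pp : PowerSeries K) * G := by ring
    _ = PowerSeries.C V * G := by rw [hFP]
  have hcoeffG : ∀ m : ℕ, PowerSeries.coeff m G
      = ∑ j ∈ Finset.Nat.antidiagonalTuple (n + 1) m, ∏ i, x i ^ j i := by
    intro m
    rw [hG, PowerSeries.coeff_prod]
    refine Finset.sum_nbij' (fun l => (l : Fin (n + 1) → ℕ))
      (fun f => Finsupp.equivFunOnFinite.symm f) ?_ ?_ ?_ ?_ ?_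
    · intro l hl
      rw [Finset.mem_finsuppAntidiag] at hl
      rw [Finset.Nat.mem_antidiagonalTuple]
      exact hl.1
    · intro f hf
      rw [Finset.Nat.mem_antidiagonalTuple] at hf
      rw [Finset.mem_finsuppAntidiag]
      constructor
      · rw [← hf]
        apply Finset.sum_congr rfl
        intro i _
        simp
      · exact fun i _ => Finset.mem_univ i
    · intro l _
      exact Finsupp.equivFunOnFinite_symm_coe l
    · intro f _
      rfl
    · intro l _
      apply Finset.prod_congr rfl
      intro i _
      rw [PowerSeries.coeff_mk]
  have hmain : D r = V * ∑ j ∈ Finset.Nat.antidiagonalTuple (n + 1) (r - n), ∏ i, x i ^ j i := by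
    have h1 := congrArg (PowerSeries.coeff (r - n)) hFeq
    rw [hF, PowerSeries.coeff_mk, ← PowerSeries.smul_eq_C_mul, map_smul, smul_eq_mul,
      hcoeffG] at h1
    rwa [Nat.add_sub_cancel' hr] at h1
  rw [hM r]
  show D r / V = _
  rw [hmain, mul_comm, mul_div_assoc, div_self hV, mul_one]
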